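/- Let n ≥ 1 and let a, b₁, …, b_{2n+1}, c ∈ ℂ satisfy b_{i+n} = b_i for 1 ≤ i ≤ n and a − c − b_{2n+1} + 1 = 0. Let u be a smooth (infinitely complex-differentiable) solution of the Appell–Lauricella system E_D^{2n+1}(a, b₁,…,b_{2n+1}, c) on an open set U ⊆ ℂ^{2n+1} contained in the complement of the divisor ∏_{j=1}^{2n+1} x_j(1−x_j) ∏_{i<j}(x_i−x_j) = 0. Define v(x₁,…,x_n) := u(x₁,…,x_n, −x₁,…,−x_n, −1) on the open set V = {x ∈ ℂⁿ : (x₁,…,x_n,−x₁,…,−x_n,−1) ∈ U}. Then v satisfies the system 𝓔(a, b₁,…,b_n, c) at every point of V, i.e. D_iD_j v = Σ_{k=1}^n q^k_{ij} D_k v + q^0_{ij} v for all 1 ≤ i, j ≤ n. -/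

import Mathlib

open scoped BigOperators

noncomputable section

/-- The Euler operator `D_i = x_i ∂/∂x_i` acting on functions of `m` complex variables. -/
def Dop {m : ℕ} (i : Fin m) (u : (Fin m → ℂ) → ℂ) : (Fin m → ℂ) → ℂ :=
  fun x => x i * fderiv ℂ u x (Pi.single i 1)

/-- The coefficients `p^k_{ij}` of the Appell–Lauricella system `E_D^m(a, b, c)`. -/
def pCoeff {m : ℕ} (a : ℂ) (b : Fin m → ℂ) (c : ℂ) (k i j : Fin m) (x : Fin m → ℂ) : ℂ :=
  if i = j then
    (if k = i then
      -(∑ l ∈ Finset.univ.erase i, b l * x l / (x i - x l))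
        + ((a + b i) * x i - c + 1) / (1 - x i)
     else b i * (x i / (1 - x i) - x i / (x k - x i)))
  else if k = i then b j * x j / (x i - x j)
  else if k = j then b i * x i / (x j - x i)
  else 0

/-- The coefficients `p^0_{ij}` of the Appell–Lauricella system `E_D^m(a, b, c)`. -/
def pCoeff0 {m : ℕ} (a : ℂ) (b : Fin m → ℂ) (c : ℂ) (i j : Fin m) (x : Fin m → ℂ) : ℂ :=
  if i = j then a * b i * x i / (1 - x i) else 0

/-- `u` solves the Appell–Lauricella hypergeometric system `E_D^m(a, b, c)`
at every point of `U`. -/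
def SolvesED {m : ℕ} (a : ℂ) (b : Fin m → ℂ) (c : ℂ) (u : (Fin m → ℂ) → ℂ)
    (U : Set (Fin m → ℂ)) : Prop :=
  ∀ x ∈ U, ∀ i j : Fin m,
    Dop i (Dop j u) x =
      (∑ k, pCoeff a b c k i j x * Dop k u x) + pCoeff0 a b c i j x * u x

/-- The coefficients `q^k_{ij}` of the system `𝓔(a, b, c)`. -/
def qCoeff {n : ℕ} (a : ℂ) (b : Fin n → ℂ) (c : ℂ) (k i j : Fin n) (x : Fin n → ℂ) : ℂ :=
  if i = j then
    (if k = i then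
      -(∑ l ∈ Finset.univ.erase i, 2 * b l * x l ^ 2 / (x i ^ 2 - x l ^ 2))
        + ((a + 2 * b i) * x i ^ 2 + a - 2 * c + 2) / (1 - x i ^ 2)
     else 2 * b i * (x i ^ 2 / (1 - x i ^ 2) - x i ^ 2 / (x k ^ 2 - x i ^ 2)))
  else if k = i then 2 * b j * x j ^ 2 / (x i ^ 2 - x j ^ 2)
  else if k = j then 2 * b i * x i ^ 2 / (x j ^ 2 - x i ^ 2)
  else 0

/-- The coefficients `q^0_{ij}` of the system `𝓔(a, b, c)`. -/
def qCoeff0 {n : ℕ} (a : ℂ) (b : Fin n → ℂ) (c : ℂ) (i j : Fin n) (x : Fin n → ℂ) : ℂ :=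
  if i = j then 2 * a * b i * x i ^ 2 / (1 - x i ^ 2) else 0

/-- `v` solves the system `𝓔(a, b, c)` at every point of `V`. -/
def SolvesE {n : ℕ} (a : ℂ) (b : Fin n → ℂ) (c : ℂ) (v : (Fin n → ℂ) → ℂ)
    (V : Set (Fin n → ℂ)) : Prop :=
  ∀ x ∈ V, ∀ i j : Fin n,
    Dop i (Dop j v) x =
      (∑ k, qCoeff a b c k i j x * Dop k v x) + qCoeff0 a b c i j x * v x

/-- The complement of the divisor `∏_j x_j (1 - x_j) ∏_{i<j} (x_i - x_j) = 0`. -/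
def divisorComplement (m : ℕ) : Set (Fin m → ℂ) :=
  {x | (∏ j, x j * (1 - x j)) *
      ∏ p ∈ Finset.univ.filter (fun p : Fin m × Fin m => p.1 < p.2), (x p.1 - x p.2) ≠ 0}

/-- The embedding `(x₁, …, x_n) ↦ (x₁, …, x_n, -x₁, …, -x_n, -1)`. -/
def emb (n : ℕ) (x : Fin n → ℂ) : Fin (2 * n + 1) → ℂ :=
  fun j =>
    if h : (j : ℕ) < n then x ⟨j, h⟩
    else if h2 : (j : ℕ) < 2 * n then -x ⟨(j : ℕ) - n, by omega⟩
    else -1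

def e1 {n : ℕ} (i : Fin n) : Fin (2*n+1) := ⟨i, Nat.lt_of_lt_of_le i.isLt (by omega)⟩
def e2 {n : ℕ} (i : Fin n) : Fin (2*n+1) := ⟨(i:ℕ) + n, (Nat.add_lt_add_right i.isLt n).trans_le (by omega)⟩
def elast (n : ℕ) : Fin (2*n+1) := ⟨2*n, Nat.lt_succ_self _⟩

lemma e1_inj {n : ℕ} {i j : Fin n} : e1 i = e1 j ↔ i = j := by
  simp [e1, Fin.ext_iff]
lemma e2_inj {n : ℕ} {i j : Fin n} : e2 i = e2 j ↔ i = j := by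
  simp [e2, Fin.ext_iff]
lemma e1_ne_e2 {n : ℕ} (i j : Fin n) : e1 i ≠ e2 j := by
  simp [e1, e2, Fin.ext_iff]; omega
lemma e1_ne_elast {n : ℕ} (i : Fin n) : e1 i ≠ elast n := by
  simp [e1, elast, Fin.ext_iff]; omega
lemma e2_ne_elast {n : ℕ} (i : Fin n) : e2 i ≠ elast n := by
  simp [e2, elast, Fin.ext_iff]; omega

lemma emb_e1 {n : ℕ} (x : Fin n → ℂ) (i : Fin n) : emb n x (e1 i) = x i := by
  simp [emb, e1]
lemma emb_e2 {n : ℕ} (x : Fin n → ℂ) (i : Fin n) : emb n x (e2 i) = -x i := by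
  simp only [emb, e2]
  split_ifs with h1
  · omega
  · simp [show (i:ℕ) + n < 2 * n by omega]
lemma emb_elast {n : ℕ} (x : Fin n → ℂ) : emb n x (elast n) = -1 := by
  simp only [emb, elast]
  split_ifs with h1
  · omega
  · simp
    intro h; omega

def embL (n : ℕ) : (Fin n → ℂ) →L[ℂ] (Fin (2*n+1) → ℂ) :=
  ContinuousLinearMap.pi fun j =>
    if h : (j:ℕ) < n then ContinuousLinearMap.proj ⟨j, h⟩
    else if h2 : (j:ℕ) < 2*n then -(ContinuousLinearMap.proj ⟨(j:ℕ)-n, by omega⟩) else 0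

lemma emb_eq (n : ℕ) :
    emb n = fun x => embL n x + fun j : Fin (2*n+1) => if (j:ℕ) < 2*n then 0 else (-1:ℂ) := by
  funext x j
  simp only [emb, embL, ContinuousLinearMap.pi_apply, Pi.add_apply]
  split_ifs with h h2 h3 h4 h5 <;>
    simp_all [ContinuousLinearMap.proj_apply] <;> omega

lemma hasFDerivAt_emb {n : ℕ} (x : Fin n → ℂ) : HasFDerivAt (emb n) (embL n) x := by
  rw [emb_eq]
  exact (embL n).hasFDerivAt.add_const _

lemma continuous_emb (n : ℕ) : Continuous (emb n) := by
  rw [emb_eq]; exact (embL n).continuous.add continuous_const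

lemma embL_single {n : ℕ} (i : Fin n) :
    embL n (Pi.single i 1) = Pi.single (e1 i) 1 - Pi.single (e2 i) 1 := by
  funext j
  simp only [embL, ContinuousLinearMap.pi_apply, Pi.sub_apply]
  rcases lt_or_ge (j:ℕ) n with h | h
  · rw [dif_pos h]
    rw [ContinuousLinearMap.proj_apply]
    rw [Pi.single_apply, Pi.single_apply, Pi.single_apply]
    have : (j = e1 i) ↔ ((⟨(j:ℕ), h⟩ : Fin n) = i) := by
      simp [e1, Fin.ext_iff]
    have h2 : ¬ (j = e2 i) := by simp [e2, Fin.ext_iff]; omega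
    by_cases hc : (⟨(j:ℕ), h⟩ : Fin n) = i <;> simp_all
  · rw [dif_neg (by omega)]
    rcases lt_or_ge (j:ℕ) (2*n) with h2 | h2
    · rw [dif_pos h2]
      simp only [ContinuousLinearMap.neg_apply, ContinuousLinearMap.proj_apply]
      rw [Pi.single_apply, Pi.single_apply, Pi.single_apply]
      have h3 : ¬ (j = e1 i) := by simp [e1, Fin.ext_iff]; omega
      have : (j = e2 i) ↔ ((⟨(j:ℕ) - n, by omega⟩ : Fin n) = i) := by
        simp [e2, Fin.ext_iff]; omega
      by_cases hc : (⟨(j:ℕ) - n, by omega⟩ : Fin n) = i <;> simp_all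
    · rw [dif_neg (by omega)]
      have h3 : ¬ (j = e1 i) := by simp [e1, Fin.ext_iff]; omega
      have h4 : ¬ (j = e2 i) := by simp [e2, Fin.ext_iff]; omega
      simp [Pi.single_apply, h3, h4]

lemma Dop_comp {n : ℕ} (f : (Fin (2*n+1) → ℂ) → ℂ) (x : Fin n → ℂ)
    (hf : DifferentiableAt ℂ f (emb n x)) (i : Fin n) :
    Dop i (fun z => f (emb n z)) x = Dop (e1 i) f (emb n x) + Dop (e2 i) f (emb n x) := by
  have h1 : HasFDerivAt (fun z => f (emb n z))
      ((fderiv ℂ f (emb n x)).comp (embL n)) x :=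
    hf.hasFDerivAt.comp x (hasFDerivAt_emb x)
  simp only [Dop]
  rw [h1.fderiv, ContinuousLinearMap.comp_apply, embL_single, map_sub, emb_e1, emb_e2]
  ring

lemma diffDop {m : ℕ} {u : (Fin m → ℂ) → ℂ} {U : Set (Fin m → ℂ)} (hU : IsOpen U)
    (hu : ContDiffOn ℂ ⊤ u U) (k : Fin m) {y : Fin m → ℂ} (hy : y ∈ U) :
    DifferentiableAt ℂ (Dop k u) y := by
  have hf : ContDiffOn ℂ ⊤ (fderiv ℂ u) U := hu.fderiv_of_isOpen hU le_top
  have h2 : ContDiffOn ℂ ⊤ (fun z => fderiv ℂ u z (Pi.single k 1)) U :=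
    hf.clm_apply contDiffOn_const
  have h3 : DifferentiableAt ℂ (fun z => fderiv ℂ u z (Pi.single k 1)) y :=
    (h2.differentiableOn (by simp)).differentiableAt (hU.mem_nhds hy)
  have h4 : DifferentiableAt ℂ (fun z : Fin m → ℂ => z k) y :=
    (ContinuousLinearMap.proj k : (Fin m → ℂ) →L[ℂ] ℂ).differentiableAt
  exact h4.mul h3

lemma Dop_add {m : ℕ} {f g : (Fin m → ℂ) → ℂ} {y : Fin m → ℂ}
    (hf : DifferentiableAt ℂ f y) (hg : DifferentiableAt ℂ g y) (k : Fin m) :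
    Dop k (fun z => f z + g z) y = Dop k f y + Dop k g y := by
  simp only [Dop]
  rw [fderiv_fun_add hf hg]
  simp [mul_add]


lemma sum_split {n : ℕ} (f : Fin (2*n+1) → ℂ) :
    ∑ k, f k = (∑ k : Fin n, f (e1 k)) + (∑ k : Fin n, f (e2 k)) + f (elast n) := by
  set g : ℕ → ℂ := fun m => if h : m < 2*n+1 then f ⟨m, h⟩ else 0 with hg
  have h1 : ∑ k, f k = ∑ m ∈ Finset.range (2*n+1), g m := by
    rw [← Fin.sum_univ_eq_sum_range]
    refine Finset.sum_congr rfl fun k _ => ?_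
    simp only [hg]
    rw [dif_pos k.isLt]
  have h2 : ∑ k : Fin n, f (e1 k) = ∑ m ∈ Finset.range n, g m := by
    rw [← Fin.sum_univ_eq_sum_range]
    refine Finset.sum_congr rfl fun k _ => ?_
    simp only [hg]
    rw [dif_pos (by omega)]
    rfl
  have h3 : ∑ k : Fin n, f (e2 k) = ∑ m ∈ Finset.range n, g (n + m) := by
    rw [← Fin.sum_univ_eq_sum_range]
    refine Finset.sum_congr rfl fun k _ => ?_
    simp only [hg]
    rw [dif_pos (by omega)]
    congr 1
    exact Fin.ext (by simp [e2]; omega)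
  rw [h1, h2, h3, show 2*n+1 = (n+n)+1 by ring, Finset.sum_range_succ,
    Finset.sum_range_add]
  have h4 : g (n+n) = f (elast n) := by
    simp only [hg]
    rw [dif_pos (by omega)]
    congr 1
    exact Fin.ext (by simp [elast]; omega)
  rw [h4]

section evals
variable {m : ℕ} (a : ℂ) (b : Fin m → ℂ) (c : ℂ) (x : Fin m → ℂ)

lemma pCoeff_diag_self (i : Fin m) :
    pCoeff a b c i i i x =
      -(∑ l ∈ Finset.univ.erase i, b l * x l / (x i - x l))
        + ((a + b i) * x i - c + 1) / (1 - x i) := by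
  simp [pCoeff]

lemma pCoeff_diag_other {k i : Fin m} (h : k ≠ i) :
    pCoeff a b c k i i x = b i * (x i / (1 - x i) - x i / (x k - x i)) := by
  simp [pCoeff, h]

lemma pCoeff_off_left {i j : Fin m} (h : i ≠ j) :
    pCoeff a b c i i j x = b j * x j / (x i - x j) := by
  simp [pCoeff, h]

lemma pCoeff_off_right {i j : Fin m} (h : i ≠ j) :
    pCoeff a b c j i j x = b i * x i / (x j - x i) := by
  simp [pCoeff, h, h.symm]

lemma pCoeff_off_zero {k i j : Fin m} (h : i ≠ j) (hki : k ≠ i) (hkj : k ≠ j) :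
    pCoeff a b c k i j x = 0 := by
  simp [pCoeff, h, hki, hkj]

lemma pCoeff0_diag (i : Fin m) : pCoeff0 a b c i i x = a * b i * x i / (1 - x i) := by
  simp [pCoeff0]

lemma pCoeff0_off {i j : Fin m} (h : i ≠ j) : pCoeff0 a b c i j x = 0 := by
  simp [pCoeff0, h]
end evals

section alg
variable {n : ℕ} (a : ℂ) (b : Fin (2*n+1) → ℂ) (c : ℂ) (x : Fin n → ℂ)
variable (hb2 : ∀ k : Fin n, b (e2 k) = b (e1 k))
variable (hsub : ∀ k l : Fin n, k ≠ l → x k - x l ≠ 0)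
variable (hadd : ∀ k l : Fin n, x k + x l ≠ 0)

include hsub hadd in
lemma sq_sub_ne {i l : Fin n} (h : i ≠ l) : x i ^ 2 - x l ^ 2 ≠ 0 := by
  have h2 := mul_ne_zero (hsub i l h) (hadd i l)
  rwa [show (x i - x l) * (x i + x l) = x i ^ 2 - x l ^ 2 from by ring] at h2

include hb2 hsub hadd in
lemma S1_eval (i : Fin n) :
    ∑ l ∈ Finset.univ.erase (e1 i),
        b l * (emb n x) l / ((emb n x) (e1 i) - (emb n x) l)
    = (∑ l ∈ Finset.univ.erase i, 2 * b (e1 l) * x l ^ 2 / (x i ^ 2 - x l ^ 2))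
      + (- b (e1 i) / 2) + b (elast n) * (-1) / (x i + 1) := by
  set y := emb n x with hy
  set g : Fin (2*n+1) → ℂ := fun l => b l * y l / (y (e1 i) - y l) with hgdef
  have hgi : g (e1 i) = 0 := by simp [hgdef]
  rw [Finset.sum_erase _ hgi, sum_split g]
  have hglast : g (elast n) = b (elast n) * (-1) / (x i + 1) := by
    simp only [hgdef, hy, emb_elast, emb_e1, sub_neg_eq_add]
  have hpair : (∑ k : Fin n, g (e1 k)) + (∑ k : Fin n, g (e2 k))
      = (∑ l ∈ Finset.univ.erase i, 2 * b (e1 l) * x l ^ 2 / (x i ^ 2 - x l ^ 2))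
        + (- b (e1 i) / 2) := by
    rw [← Finset.sum_add_distrib, ← Finset.add_sum_erase _ _ (Finset.mem_univ i)]
    have hterm : ∀ l ∈ Finset.univ.erase i,
        g (e1 l) + g (e2 l) = 2 * b (e1 l) * x l ^ 2 / (x i ^ 2 - x l ^ 2) := by
      intro l hl
      have hli : l ≠ i := Finset.ne_of_mem_erase hl
      have hs := hsub i l hli.symm
      have ha := hadd i l
      have hsq := sq_sub_ne x hsub hadd hli.symm
      simp only [hgdef, hy, emb_e1, emb_e2, sub_neg_eq_add, hb2 l]
      field_simp
      ring
    rw [Finset.sum_congr rfl hterm]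
    have hhead : g (e1 i) + g (e2 i) = - b (e1 i) / 2 := by
      have ha := hadd i i
      simp only [hgdef, hy, emb_e1, emb_e2, sub_neg_eq_add, hb2 i, hgi]
      rw [sub_self, div_zero]
      have hxi : x i ≠ 0 := by intro h; exact ha (by rw [h, add_zero])
      field_simp
      ring
    rw [hhead]
    ring
  rw [hpair, hglast]

end alg

section alg2
variable {n : ℕ} (b : Fin (2*n+1) → ℂ) (x : Fin n → ℂ)
variable (hb2 : ∀ k : Fin n, b (e2 k) = b (e1 k))
variable (hsub : ∀ k l : Fin n, k ≠ l → x k - x l ≠ 0)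
variable (hadd : ∀ k l : Fin n, x k + x l ≠ 0)

include hb2 hsub hadd in
lemma S2_eval (i : Fin n) :
    ∑ l ∈ Finset.univ.erase (e2 i),
        b l * (emb n x) l / ((emb n x) (e2 i) - (emb n x) l)
    = (∑ l ∈ Finset.univ.erase i, 2 * b (e1 l) * x l ^ 2 / (x i ^ 2 - x l ^ 2))
      + (- b (e1 i) / 2) + b (elast n) * (-1) / (1 - x i) := by
  set y := emb n x with hy
  set g : Fin (2*n+1) → ℂ := fun l => b l * y l / (y (e2 i) - y l) with hgdef
  have hgi : g (e2 i) = 0 := by simp [hgdef]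
  rw [Finset.sum_erase _ hgi, sum_split g]
  have hglast : g (elast n) = b (elast n) * (-1) / (1 - x i) := by
    simp only [hgdef, hy, emb_elast, emb_e2]
    rw [show -x i - (-1) = 1 - x i from by ring]
  have hpair : (∑ k : Fin n, g (e1 k)) + (∑ k : Fin n, g (e2 k))
      = (∑ l ∈ Finset.univ.erase i, 2 * b (e1 l) * x l ^ 2 / (x i ^ 2 - x l ^ 2))
        + (- b (e1 i) / 2) := by
    rw [← Finset.sum_add_distrib, ← Finset.add_sum_erase _ _ (Finset.mem_univ i)]
    have hterm : ∀ l ∈ Finset.univ.erase i,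
        g (e1 l) + g (e2 l) = 2 * b (e1 l) * x l ^ 2 / (x i ^ 2 - x l ^ 2) := by
      intro l hl
      have hli : l ≠ i := Finset.ne_of_mem_erase hl
      have hs : -x i - x l ≠ 0 := by
        rw [show -x i - x l = -(x i + x l) from by ring]
        exact neg_ne_zero.mpr (hadd i l)
      have ha : -x i + x l ≠ 0 := by
        rw [show -x i + x l = -(x i - x l) from by ring]
        exact neg_ne_zero.mpr (hsub i l hli.symm)
      have hsq := sq_sub_ne x hsub hadd hli.symm
      simp only [hgdef, hy, emb_e1, emb_e2, sub_neg_eq_add, hb2 l]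
      have hs2 := hsub l i hli
      rw [show -x i + x l = -(x i - x l) from by ring] at ha ⊢
      rw [div_add_div _ _ hs ha, div_eq_div_iff (mul_ne_zero hs ha) hsq]
      ring
    rw [Finset.sum_congr rfl hterm]
    have hhead : g (e1 i) + g (e2 i) = - b (e1 i) / 2 := by
      have ha := hadd i i
      have hs : -x i - x i ≠ 0 := by
        rw [show -x i - x i = -(x i + x i) from by ring]
        exact neg_ne_zero.mpr (hadd i i)
      simp only [hgdef, hy, emb_e1, emb_e2]
      rw [sub_self, div_zero, add_zero]
      rw [div_eq_div_iff hs two_ne_zero]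
      ring
    rw [hhead]
    ring
  rw [hpair, hglast]
end alg2

section qevals
variable {n : ℕ} (a : ℂ) (b : Fin n → ℂ) (c : ℂ) (x : Fin n → ℂ)

lemma qCoeff_diag_self (i : Fin n) :
    qCoeff a b c i i i x =
      -(∑ l ∈ Finset.univ.erase i, 2 * b l * x l ^ 2 / (x i ^ 2 - x l ^ 2))
        + ((a + 2 * b i) * x i ^ 2 + a - 2 * c + 2) / (1 - x i ^ 2) := by
  simp [qCoeff]

lemma qCoeff_diag_other {k i : Fin n} (h : k ≠ i) :
    qCoeff a b c k i i x
      = 2 * b i * (x i ^ 2 / (1 - x i ^ 2) - x i ^ 2 / (x k ^ 2 - x i ^ 2)) := by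
  simp [qCoeff, h]

lemma qCoeff_off_left {i j : Fin n} (h : i ≠ j) :
    qCoeff a b c i i j x = 2 * b j * x j ^ 2 / (x i ^ 2 - x j ^ 2) := by
  simp [qCoeff, h]

lemma qCoeff_off_right {i j : Fin n} (h : i ≠ j) :
    qCoeff a b c j i j x = 2 * b i * x i ^ 2 / (x j ^ 2 - x i ^ 2) := by
  simp [qCoeff, h, h.symm]

lemma qCoeff_off_zero {k i j : Fin n} (h : i ≠ j) (hki : k ≠ i) (hkj : k ≠ j) :
    qCoeff a b c k i j x = 0 := by
  simp [qCoeff, h, hki, hkj]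

lemma qCoeff0_diag (i : Fin n) : qCoeff0 a b c i i x = 2 * a * b i * x i ^ 2 / (1 - x i ^ 2) := by
  simp [qCoeff0]

lemma qCoeff0_off {i j : Fin n} (h : i ≠ j) : qCoeff0 a b c i j x = 0 := by
  simp [qCoeff0, h]
end qevals

section scalars
variable (x w T a b c : ℂ)

lemma scalarA1 (h1 : 1 - x ≠ 0) (h2 : 1 + x ≠ 0) (h0 : x ≠ 0) :
    (-(T + (-b/2) + (a - c + 1) * (-1)/(x+1)) + ((a + b)*x - c + 1)/(1-x))
      + b * (-x)/(x+x) + b * (-x)/(x+x) + b * ((-x)/(1+x) - (-x)/(x+x))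
    = -T + ((a + 2*b)*x^2 + a - 2*c + 2)/(1-x^2) := by
  have h3 : x + x ≠ 0 := by intro h; exact h0 (by linear_combination h/2)
  have h4 : x + 1 ≠ 0 := by intro h; exact h2 (by linear_combination h)
  have h5 : 1 - x^2 ≠ 0 := by intro h; exact (mul_ne_zero h1 h2) (by linear_combination h)
  have hD : (2*(x+1)*(1-x)*(x+x)*(x+x)) ≠ 0 :=
    mul_ne_zero (mul_ne_zero (mul_ne_zero (mul_ne_zero two_ne_zero h4) h1) h3) h3
  field_simp
  ring

lemma scalarB1 (h1 : 1 - x ≠ 0) (h2 : 1 + x ≠ 0) (h0 : x ≠ 0) :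
    b * (x/(1-x) - x/(-x-x)) + b * x/(-x-x) + b * x/(-x-x)
      + (-(T + (-b/2) + (a - c + 1) * (-1)/(1-x)) + ((a + b)*(-x) - c + 1)/(1+x))
    = -T + ((a + 2*b)*x^2 + a - 2*c + 2)/(1-x^2) := by
  have h5 : 1 - x^2 ≠ 0 := by intro h; exact (mul_ne_zero h1 h2) (by linear_combination h)
  have h3 : -x - x ≠ 0 := by intro h; exact h0 (by linear_combination -h/2)
  have hD : ((1 - x) * (-x - x) * (-x - x) * (-x - x) * (2 * (1 - x) * (1 + x))) ≠ 0 :=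
    mul_ne_zero (mul_ne_zero (mul_ne_zero (mul_ne_zero h1 h3) h3) h3)
      (mul_ne_zero (mul_ne_zero two_ne_zero h1) h2)
  field_simp
  ring

lemma scalarA2 (h1 : 1 - x ≠ 0) (h2 : 1 + x ≠ 0) (hs : w - x ≠ 0) (ha : w + x ≠ 0) :
    b * (x/(1-x) - x/(w-x)) + b * ((-x)/(1+x) - (-x)/(w+x))
    = 2*b*(x^2/(1-x^2) - x^2/(w^2-x^2)) := by
  have h5 : 1 - x^2 ≠ 0 := by intro h; exact (mul_ne_zero h1 h2) (by linear_combination h)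
  have h6 : w^2 - x^2 ≠ 0 := by intro h; exact (mul_ne_zero hs ha) (by linear_combination h)
  field_simp
  ring

lemma scalarB2 (h1 : 1 - x ≠ 0) (h2 : 1 + x ≠ 0) (hs : -w - x ≠ 0) (ha : -w + x ≠ 0) :
    b * (x/(1-x) - x/(-w-x)) + b * ((-x)/(1+x) - (-x)/(-w+x))
    = 2*b*(x^2/(1-x^2) - x^2/(w^2-x^2)) := by
  have h5 : 1 - x^2 ≠ 0 := by intro h; exact (mul_ne_zero h1 h2) (by linear_combination h)
  have h6 : w^2 - x^2 ≠ 0 := by intro h; exact (mul_ne_zero hs ha) (by linear_combination h)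
  field_simp
  ring

lemma scalarA3 (hs : x - w ≠ 0) (ha : x + w ≠ 0) :
    b * w/(x-w) + b * (-w)/(x+w) = 2*b*w^2/(x^2-w^2) := by
  have h6 : x^2 - w^2 ≠ 0 := by intro h; exact (mul_ne_zero hs ha) (by linear_combination h)
  field_simp
  ring

lemma scalarB3 (hs : x - w ≠ 0) (ha : x + w ≠ 0) :
    b * w/(-x-w) + b * (-w)/(-x+w) = 2*b*w^2/(x^2-w^2) := by
  have hs' : -x - w ≠ 0 := by intro h; exact ha (by linear_combination -h)
  have ha' : -x + w ≠ 0 := by intro h; exact hs (by linear_combination -h)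
  have h6 : x^2 - w^2 ≠ 0 := by intro h; exact (mul_ne_zero hs ha) (by linear_combination h)
  field_simp
  ring

lemma scalarC1 (h1 : 1 - x ≠ 0) (h2 : 1 + x ≠ 0) :
    b * (x/(1-x) - x/(-1-x)) + b * ((-x)/(1+x) - (-x)/(-1+x)) = 0 := by
  have h3 : -1 - x ≠ 0 := by intro h; exact h2 (by linear_combination -h)
  have h4 : -1 + x ≠ 0 := by intro h; exact h1 (by linear_combination -h)
  field_simp
  ring

lemma scalarD1 (h1 : 1 - x ≠ 0) (h2 : 1 + x ≠ 0) :
    a * b * x/(1-x) + a * b * (-x)/(1+x) = 2*a*b*x^2/(1-x^2) := by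
  have h5 : 1 - x^2 ≠ 0 := by intro h; exact (mul_ne_zero h1 h2) (by linear_combination h)
  field_simp
  ring

end scalars

section coeffs
variable {n : ℕ} (a : ℂ) (b : Fin (2*n+1) → ℂ) (c : ℂ) (x : Fin n → ℂ)
variable (hb2 : ∀ k : Fin n, b (e2 k) = b (e1 k))
variable (hlast' : b (elast n) = a - c + 1)
variable (hx1 : ∀ k : Fin n, (1:ℂ) - x k ≠ 0)
variable (hx1' : ∀ k : Fin n, (1:ℂ) + x k ≠ 0)
variable (hx0 : ∀ k : Fin n, x k ≠ 0)
variable (hsub : ∀ k l : Fin n, k ≠ l → x k - x l ≠ 0)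
variable (hadd : ∀ k l : Fin n, x k + x l ≠ 0)

include hb2 hlast' hx1 hx1' hx0 hsub hadd in
lemma coeffA (i j k : Fin n) :
    pCoeff a b c (e1 k) (e1 i) (e1 j) (emb n x) + pCoeff a b c (e1 k) (e1 i) (e2 j) (emb n x)
      + pCoeff a b c (e1 k) (e2 i) (e1 j) (emb n x)
      + pCoeff a b c (e1 k) (e2 i) (e2 j) (emb n x)
    = qCoeff a (fun l => b (e1 l)) c k i j x := by
  rcases eq_or_ne i j with rfl | hij
  · by_cases hk : k = i
    · subst hk
      rw [pCoeff_diag_self, pCoeff_off_left _ _ _ _ (e1_ne_e2 k k),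
        pCoeff_off_right _ _ _ _ (Ne.symm (e1_ne_e2 k k)),
        pCoeff_diag_other _ _ _ _ (e1_ne_e2 k k),
        S1_eval b x hb2 hsub hadd, qCoeff_diag_self]
      simp only [emb_e1, emb_e2, hb2 k, hlast', sub_neg_eq_add]
      exact scalarA1 (x k) (∑ l ∈ Finset.univ.erase k,
          2 * b (e1 l) * x l ^ 2 / (x k ^ 2 - x l ^ 2)) a (b (e1 k)) c
        (hx1 k) (hx1' k) (hx0 k)
    · rw [pCoeff_diag_other _ _ _ _ (fun h => hk (e1_inj.mp h)),
        pCoeff_off_zero _ _ _ _ (e1_ne_e2 i i) (fun h => hk (e1_inj.mp h)) (e1_ne_e2 k i),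
        pCoeff_off_zero _ _ _ _ (Ne.symm (e1_ne_e2 i i)) (e1_ne_e2 k i)
          (fun h => hk (e1_inj.mp h)),
        pCoeff_diag_other _ _ _ _ (e1_ne_e2 k i),
        qCoeff_diag_other _ _ _ _ hk]
      simp only [emb_e1, emb_e2, hb2 i, sub_neg_eq_add]
      linear_combination scalarA2 (x i) (x k) (b (e1 i)) (hx1 i) (hx1' i)
        (hsub k i hk) (hadd k i)
  · by_cases hki : k = i
    · subst hki
      rw [pCoeff_off_left _ _ _ _ (fun h => hij (e1_inj.mp h)),
        pCoeff_off_left _ _ _ _ (e1_ne_e2 k j),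
        pCoeff_off_zero _ _ _ _ (Ne.symm (e1_ne_e2 j k)) (e1_ne_e2 k k)
          (fun h => hij (e1_inj.mp h)),
        pCoeff_off_zero _ _ _ _ (fun h => hij (e2_inj.mp h)) (e1_ne_e2 k k) (e1_ne_e2 k j),
        qCoeff_off_left _ _ _ _ hij]
      simp only [emb_e1, emb_e2, hb2 j, sub_neg_eq_add]
      linear_combination scalarA3 (x k) (x j) (b (e1 j)) (hsub k j hij) (hadd k j)
    · by_cases hkj : k = j
      · subst hkj
        rw [pCoeff_off_right _ _ _ _ (fun h => hij (e1_inj.mp h)),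
          pCoeff_off_zero _ _ _ _ (e1_ne_e2 i k) (fun h => hki (e1_inj.mp h)) (e1_ne_e2 k k),
          pCoeff_off_right _ _ _ _ (Ne.symm (e1_ne_e2 k i)),
          pCoeff_off_zero _ _ _ _ (fun h => hij (e2_inj.mp h)) (e1_ne_e2 k i) (e1_ne_e2 k k),
          qCoeff_off_right _ _ _ _ hij]
        simp only [emb_e1, emb_e2, hb2 i, sub_neg_eq_add]
        linear_combination scalarA3 (x k) (x i) (b (e1 i)) (hsub k i (Ne.symm hij))
          (hadd k i)
      · rw [pCoeff_off_zero _ _ _ _ (fun h => hij (e1_inj.mp h))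
            (fun h => hki (e1_inj.mp h)) (fun h => hkj (e1_inj.mp h)),
          pCoeff_off_zero _ _ _ _ (e1_ne_e2 i j) (fun h => hki (e1_inj.mp h)) (e1_ne_e2 k j),
          pCoeff_off_zero _ _ _ _ (Ne.symm (e1_ne_e2 j i)) (e1_ne_e2 k i)
            (fun h => hkj (e1_inj.mp h)),
          pCoeff_off_zero _ _ _ _ (fun h => hij (e2_inj.mp h)) (e1_ne_e2 k i) (e1_ne_e2 k j),
          qCoeff_off_zero _ _ _ _ hij hki hkj]
        ring

include hb2 hlast' hx1 hx1' hx0 hsub hadd in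
lemma coeffB (i j k : Fin n) :
    pCoeff a b c (e2 k) (e1 i) (e1 j) (emb n x) + pCoeff a b c (e2 k) (e1 i) (e2 j) (emb n x)
      + pCoeff a b c (e2 k) (e2 i) (e1 j) (emb n x)
      + pCoeff a b c (e2 k) (e2 i) (e2 j) (emb n x)
    = qCoeff a (fun l => b (e1 l)) c k i j x := by
  rcases eq_or_ne i j with rfl | hij
  · by_cases hk : k = i
    · subst hk
      rw [pCoeff_diag_other _ _ _ _ (Ne.symm (e1_ne_e2 k k)),
        pCoeff_off_right _ _ _ _ (e1_ne_e2 k k),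
        pCoeff_off_left _ _ _ _ (Ne.symm (e1_ne_e2 k k)),
        pCoeff_diag_self,
        S2_eval b x hb2 hsub hadd, qCoeff_diag_self]
      simp only [emb_e1, emb_e2, hb2 k, hlast', sub_neg_eq_add]
      linear_combination scalarB1 (x k) (∑ l ∈ Finset.univ.erase k,
          2 * b (e1 l) * x l ^ 2 / (x k ^ 2 - x l ^ 2)) a (b (e1 k)) c
        (hx1 k) (hx1' k) (hx0 k)
    · rw [pCoeff_diag_other _ _ _ _ (Ne.symm (e1_ne_e2 i k)),
        pCoeff_off_zero _ _ _ _ (e1_ne_e2 i i) (Ne.symm (e1_ne_e2 i k))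
          (fun h => hk (e2_inj.mp h)),
        pCoeff_off_zero _ _ _ _ (Ne.symm (e1_ne_e2 i i)) (fun h => hk (e2_inj.mp h))
          (Ne.symm (e1_ne_e2 i k)),
        pCoeff_diag_other _ _ _ _ (fun h => hk (e2_inj.mp h)),
        qCoeff_diag_other _ _ _ _ hk]
      simp only [emb_e1, emb_e2, hb2 i, sub_neg_eq_add]
      linear_combination scalarB2 (x i) (x k) (b (e1 i)) (hx1 i) (hx1' i)
        (by intro h; exact hadd k i (by linear_combination -h))
        (by intro h; exact hsub k i hk (by linear_combination -h))
  · by_cases hki : k = i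
    · subst hki
      rw [pCoeff_off_zero _ _ _ _ (fun h => hij (e1_inj.mp h)) (Ne.symm (e1_ne_e2 k k))
          (Ne.symm (e1_ne_e2 j k)),
        pCoeff_off_zero _ _ _ _ (e1_ne_e2 k j) (Ne.symm (e1_ne_e2 k k))
          (fun h => hij (e2_inj.mp h)),
        pCoeff_off_left _ _ _ _ (Ne.symm (e1_ne_e2 j k)),
        pCoeff_off_left _ _ _ _ (fun h => hij (e2_inj.mp h)),
        qCoeff_off_left _ _ _ _ hij]
      simp only [emb_e1, emb_e2, hb2 j, sub_neg_eq_add]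
      linear_combination scalarB3 (x k) (x j) (b (e1 j)) (hsub k j hij) (hadd k j)
    · by_cases hkj : k = j
      · subst hkj
        rw [pCoeff_off_zero _ _ _ _ (fun h => hij (e1_inj.mp h)) (Ne.symm (e1_ne_e2 i k))
            (Ne.symm (e1_ne_e2 k k)),
          pCoeff_off_right _ _ _ _ (e1_ne_e2 i k),
          pCoeff_off_zero _ _ _ _ (Ne.symm (e1_ne_e2 k i)) (fun h => hij (e2_inj.mp h).symm)
            (Ne.symm (e1_ne_e2 k k)),
          pCoeff_off_right _ _ _ _ (fun h => hij (e2_inj.mp h)),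
          qCoeff_off_right _ _ _ _ hij]
        simp only [emb_e1, emb_e2, hb2 i, sub_neg_eq_add]
        linear_combination scalarB3 (x k) (x i) (b (e1 i)) (hsub k i (Ne.symm hij))
          (hadd k i)
      · rw [pCoeff_off_zero _ _ _ _ (fun h => hij (e1_inj.mp h)) (Ne.symm (e1_ne_e2 i k))
            (Ne.symm (e1_ne_e2 j k)),
          pCoeff_off_zero _ _ _ _ (e1_ne_e2 i j) (Ne.symm (e1_ne_e2 i k))
            (fun h => hkj (e2_inj.mp h)),
          pCoeff_off_zero _ _ _ _ (Ne.symm (e1_ne_e2 j i)) (fun h => hki (e2_inj.mp h))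
            (Ne.symm (e1_ne_e2 j k)),
          pCoeff_off_zero _ _ _ _ (fun h => hij (e2_inj.mp h)) (fun h => hki (e2_inj.mp h))
            (fun h => hkj (e2_inj.mp h)),
          qCoeff_off_zero _ _ _ _ hij hki hkj]
        ring

include hb2 hx1 hx1' in
lemma coeffC (i j : Fin n) :
    pCoeff a b c (elast n) (e1 i) (e1 j) (emb n x)
      + pCoeff a b c (elast n) (e1 i) (e2 j) (emb n x)
      + pCoeff a b c (elast n) (e2 i) (e1 j) (emb n x)
      + pCoeff a b c (elast n) (e2 i) (e2 j) (emb n x) = 0 := by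
  rcases eq_or_ne i j with rfl | hij
  · rw [pCoeff_diag_other _ _ _ _ (Ne.symm (e1_ne_elast i)),
      pCoeff_off_zero _ _ _ _ (e1_ne_e2 i i) (Ne.symm (e1_ne_elast i))
        (Ne.symm (e2_ne_elast i)),
      pCoeff_off_zero _ _ _ _ (Ne.symm (e1_ne_e2 i i)) (Ne.symm (e2_ne_elast i))
        (Ne.symm (e1_ne_elast i)),
      pCoeff_diag_other _ _ _ _ (Ne.symm (e2_ne_elast i))]
    simp only [emb_e1, emb_e2, emb_elast, hb2 i, sub_neg_eq_add]
    linear_combination scalarC1 (x i) (b (e1 i)) (hx1 i) (hx1' i)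
  · rw [pCoeff_off_zero _ _ _ _ (fun h => hij (e1_inj.mp h)) (Ne.symm (e1_ne_elast i))
        (Ne.symm (e1_ne_elast j)),
      pCoeff_off_zero _ _ _ _ (e1_ne_e2 i j) (Ne.symm (e1_ne_elast i))
        (Ne.symm (e2_ne_elast j)),
      pCoeff_off_zero _ _ _ _ (Ne.symm (e1_ne_e2 j i)) (Ne.symm (e2_ne_elast i))
        (Ne.symm (e1_ne_elast j)),
      pCoeff_off_zero _ _ _ _ (fun h => hij (e2_inj.mp h)) (Ne.symm (e2_ne_elast i))
        (Ne.symm (e2_ne_elast j))]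
    ring

include hb2 hx1 hx1' in
lemma coeffD (i j : Fin n) :
    pCoeff0 a b c (e1 i) (e1 j) (emb n x) + pCoeff0 a b c (e1 i) (e2 j) (emb n x)
      + pCoeff0 a b c (e2 i) (e1 j) (emb n x) + pCoeff0 a b c (e2 i) (e2 j) (emb n x)
    = qCoeff0 a (fun l => b (e1 l)) c i j x := by
  rcases eq_or_ne i j with rfl | hij
  · rw [pCoeff0_diag, pCoeff0_off _ _ _ _ (e1_ne_e2 i i),
      pCoeff0_off _ _ _ _ (Ne.symm (e1_ne_e2 i i)), pCoeff0_diag, qCoeff0_diag]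
    simp only [emb_e1, emb_e2, hb2 i, sub_neg_eq_add]
    linear_combination scalarD1 (x i) a (b (e1 i)) (hx1 i) (hx1' i)
  · rw [pCoeff0_off _ _ _ _ (fun h => hij (e1_inj.mp h)),
      pCoeff0_off _ _ _ _ (e1_ne_e2 i j),
      pCoeff0_off _ _ _ _ (Ne.symm (e1_ne_e2 j i)),
      pCoeff0_off _ _ _ _ (fun h => hij (e2_inj.mp h)),
      qCoeff0_off _ _ _ _ hij]
    ring
end coeffs

section keyalg
variable {n : ℕ} (a : ℂ) (b : Fin (2*n+1) → ℂ) (c : ℂ) (x : Fin n → ℂ)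
variable (hb2 : ∀ k : Fin n, b (e2 k) = b (e1 k))
variable (hlast' : b (elast n) = a - c + 1)
variable (hx1 : ∀ k : Fin n, (1:ℂ) - x k ≠ 0)
variable (hx1' : ∀ k : Fin n, (1:ℂ) + x k ≠ 0)
variable (hx0 : ∀ k : Fin n, x k ≠ 0)
variable (hsub : ∀ k l : Fin n, k ≠ l → x k - x l ≠ 0)
variable (hadd : ∀ k l : Fin n, x k + x l ≠ 0)

include hb2 hlast' hx1 hx1' hx0 hsub hadd in
lemma key_alg (d : Fin (2*n+1) → ℂ) (uy : ℂ) (i j : Fin n) :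
    ((∑ k, pCoeff a b c k (e1 i) (e1 j) (emb n x) * d k)
        + pCoeff0 a b c (e1 i) (e1 j) (emb n x) * uy)
      + ((∑ k, pCoeff a b c k (e1 i) (e2 j) (emb n x) * d k)
        + pCoeff0 a b c (e1 i) (e2 j) (emb n x) * uy)
      + ((∑ k, pCoeff a b c k (e2 i) (e1 j) (emb n x) * d k)
        + pCoeff0 a b c (e2 i) (e1 j) (emb n x) * uy)
      + ((∑ k, pCoeff a b c k (e2 i) (e2 j) (emb n x) * d k)
        + pCoeff0 a b c (e2 i) (e2 j) (emb n x) * uy)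
    = (∑ k : Fin n, qCoeff a (fun l => b (e1 l)) c k i j x * (d (e1 k) + d (e2 k)))
      + qCoeff0 a (fun l => b (e1 l)) c i j x * uy := by
  set y := emb n x with hy
  set P : Fin (2*n+1) → ℂ := fun k =>
    pCoeff a b c k (e1 i) (e1 j) y + pCoeff a b c k (e1 i) (e2 j) y
      + pCoeff a b c k (e2 i) (e1 j) y + pCoeff a b c k (e2 i) (e2 j) y with hP
  have step1 : ((∑ k, pCoeff a b c k (e1 i) (e1 j) y * d k)
        + pCoeff0 a b c (e1 i) (e1 j) y * uy)
      + ((∑ k, pCoeff a b c k (e1 i) (e2 j) y * d k)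
        + pCoeff0 a b c (e1 i) (e2 j) y * uy)
      + ((∑ k, pCoeff a b c k (e2 i) (e1 j) y * d k)
        + pCoeff0 a b c (e2 i) (e1 j) y * uy)
      + ((∑ k, pCoeff a b c k (e2 i) (e2 j) y * d k)
        + pCoeff0 a b c (e2 i) (e2 j) y * uy)
      = (∑ k, P k * d k)
        + (pCoeff0 a b c (e1 i) (e1 j) y + pCoeff0 a b c (e1 i) (e2 j) y
          + pCoeff0 a b c (e2 i) (e1 j) y + pCoeff0 a b c (e2 i) (e2 j) y) * uy := by
    simp only [hP, add_mul]
    rw [Finset.sum_add_distrib, Finset.sum_add_distrib, Finset.sum_add_distrib]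
    ring
  rw [step1, sum_split (fun k => P k * d k)]
  have hA : ∀ k : Fin n, P (e1 k) = qCoeff a (fun l => b (e1 l)) c k i j x := fun k =>
    coeffA a b c x hb2 hlast' hx1 hx1' hx0 hsub hadd i j k
  have hB : ∀ k : Fin n, P (e2 k) = qCoeff a (fun l => b (e1 l)) c k i j x := fun k =>
    coeffB a b c x hb2 hlast' hx1 hx1' hx0 hsub hadd i j k
  have hC : P (elast n) = 0 := coeffC a b c x hb2 hx1 hx1' i j
  have hD : pCoeff0 a b c (e1 i) (e1 j) y + pCoeff0 a b c (e1 i) (e2 j) y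
      + pCoeff0 a b c (e2 i) (e1 j) y + pCoeff0 a b c (e2 i) (e2 j) y
      = qCoeff0 a (fun l => b (e1 l)) c i j x := coeffD a b c x hb2 hx1 hx1' i j
  rw [hC, hD]
  have h1 : (∑ k : Fin n, P (e1 k) * d (e1 k))
      = ∑ k : Fin n, qCoeff a (fun l => b (e1 l)) c k i j x * d (e1 k) :=
    Finset.sum_congr rfl fun k _ => by rw [hA k]
  have h2 : (∑ k : Fin n, P (e2 k) * d (e2 k))
      = ∑ k : Fin n, qCoeff a (fun l => b (e1 l)) c k i j x * d (e2 k) :=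
    Finset.sum_congr rfl fun k _ => by rw [hB k]
  rw [h1, h2]
  simp only [mul_add]
  rw [Finset.sum_add_distrib]
  ring
end keyalg


lemma divisor_facts {m : ℕ} {y : Fin m → ℂ} (h : y ∈ divisorComplement m) :
    (∀ j, y j ≠ 0) ∧ (∀ j, 1 - y j ≠ 0) ∧ (∀ p q : Fin m, p ≠ q → y p - y q ≠ 0) := by
  simp only [divisorComplement, Set.mem_setOf_eq] at h
  rw [mul_ne_zero_iff] at h
  obtain ⟨h1, h2⟩ := h
  rw [Finset.prod_ne_zero_iff] at h1 h2
  refine ⟨fun j => ?_, fun j => ?_, fun p q hpq => ?_⟩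
  · exact (mul_ne_zero_iff.mp (h1 j (Finset.mem_univ j))).1
  · exact (mul_ne_zero_iff.mp (h1 j (Finset.mem_univ j))).2
  · rcases lt_or_gt_of_ne hpq with hlt | hgt
    · exact h2 (p, q) (Finset.mem_filter.mpr ⟨Finset.mem_univ _, hlt⟩)
    · have := h2 (q, p) (Finset.mem_filter.mpr ⟨Finset.mem_univ _, hgt⟩)
      intro hc
      exact this (by linear_combination -hc)

theorem statement0 (n : ℕ) (hn : 1 ≤ n) (a c : ℂ) (b : Fin (2 * n + 1) → ℂ)
    (hb : ∀ i : Fin n, b ⟨(i : ℕ) + n, by omega⟩ = b ⟨(i : ℕ), by omega⟩)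
    (hlast : a - c - b ⟨2 * n, by omega⟩ + 1 = 0)
    (U : Set (Fin (2 * n + 1) → ℂ)) (hU : IsOpen U)
    (hUdiv : U ⊆ divisorComplement (2 * n + 1))
    (u : (Fin (2 * n + 1) → ℂ) → ℂ) (hu : ContDiffOn ℂ ⊤ u U)
    (hsol : SolvesED a b c u U) :
    SolvesE a (fun i : Fin n => b ⟨(i : ℕ), by omega⟩) c (fun x => u (emb n x))
      {x : Fin n → ℂ | emb n x ∈ U} := by
  intro x hx i j
  have hyU : emb n x ∈ U := hx
  obtain ⟨hy0, hy1, hyd⟩ := divisor_facts (hUdiv hyU)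
  have hx0 : ∀ k : Fin n, x k ≠ 0 := fun k => by
    have := hy0 (e1 k); rwa [emb_e1] at this
  have hx1 : ∀ k : Fin n, (1:ℂ) - x k ≠ 0 := fun k => by
    have := hy1 (e1 k); rwa [emb_e1] at this
  have hx1' : ∀ k : Fin n, (1:ℂ) + x k ≠ 0 := fun k => by
    have := hy1 (e2 k); rwa [emb_e2, sub_neg_eq_add] at this
  have hsub : ∀ k l : Fin n, k ≠ l → x k - x l ≠ 0 := fun k l h => by
    have := hyd (e1 k) (e1 l) (fun hh => h (e1_inj.mp hh))
    rwa [emb_e1, emb_e1] at this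
  have hadd : ∀ k l : Fin n, x k + x l ≠ 0 := fun k l => by
    have := hyd (e1 k) (e2 l) (e1_ne_e2 k l)
    rwa [emb_e1, emb_e2, sub_neg_eq_add] at this
  have hb2 : ∀ k : Fin n, b (e2 k) = b (e1 k) := fun k => hb k
  have hlast' : b (elast n) = a - c + 1 := by
    have h := hlast
    rw [show (⟨2 * n, by omega⟩ : Fin (2*n+1)) = elast n from rfl] at h
    linear_combination -h
  have hud : ∀ z ∈ U, DifferentiableAt ℂ u z := fun z hz =>
    (hu.differentiableOn (by simp)).differentiableAt (hU.mem_nhds hz)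
  have hVopen : IsOpen {x : Fin n → ℂ | emb n x ∈ U} := hU.preimage (continuous_emb n)
  have hDj : ∀ z ∈ {x : Fin n → ℂ | emb n x ∈ U}, ∀ jj : Fin n,
      Dop jj (fun t => u (emb n t)) z
        = Dop (e1 jj) u (emb n z) + Dop (e2 jj) u (emb n z) :=
    fun z hz jj => Dop_comp u z (hud _ hz) jj
  have hwdiff : DifferentiableAt ℂ (fun z => Dop (e1 j) u z + Dop (e2 j) u z) (emb n x) :=
    (diffDop hU hu (e1 j) hyU).add (diffDop hU hu (e2 j) hyU)
  have ev : Dop j (fun t => u (emb n t))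
      =ᶠ[nhds x] fun z => Dop (e1 j) u (emb n z) + Dop (e2 j) u (emb n z) := by
    filter_upwards [hVopen.mem_nhds hx] with z hz
    exact hDj z hz j
  have hfd : fderiv ℂ (Dop j (fun t => u (emb n t))) x
      = fderiv ℂ (fun z => Dop (e1 j) u (emb n z) + Dop (e2 j) u (emb n z)) x :=
    ev.fderiv_eq
  have hstep : Dop i (Dop j (fun t => u (emb n t))) x
      = Dop (e1 i) (fun z => Dop (e1 j) u z + Dop (e2 j) u z) (emb n x)
        + Dop (e2 i) (fun z => Dop (e1 j) u z + Dop (e2 j) u z) (emb n x) := by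
    have h1 : Dop i (Dop j (fun t => u (emb n t))) x
        = Dop i (fun z => Dop (e1 j) u (emb n z) + Dop (e2 j) u (emb n z)) x := by
      show x i * fderiv ℂ (Dop j (fun t => u (emb n t))) x (Pi.single i 1)
        = x i * fderiv ℂ (fun z => Dop (e1 j) u (emb n z) + Dop (e2 j) u (emb n z)) x
            (Pi.single i 1)
      rw [hfd]
    rw [h1]
    exact Dop_comp (fun z => Dop (e1 j) u z + Dop (e2 j) u z) x hwdiff i
  have hadd1 : Dop (e1 i) (fun z => Dop (e1 j) u z + Dop (e2 j) u z) (emb n x)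
      = Dop (e1 i) (Dop (e1 j) u) (emb n x) + Dop (e1 i) (Dop (e2 j) u) (emb n x) :=
    Dop_add (diffDop hU hu (e1 j) hyU) (diffDop hU hu (e2 j) hyU) (e1 i)
  have hadd2 : Dop (e2 i) (fun z => Dop (e1 j) u z + Dop (e2 j) u z) (emb n x)
      = Dop (e2 i) (Dop (e1 j) u) (emb n x) + Dop (e2 i) (Dop (e2 j) u) (emb n x) :=
    Dop_add (diffDop hU hu (e1 j) hyU) (diffDop hU hu (e2 j) hyU) (e2 i)
  rw [hstep, hadd1, hadd2, hsol _ hyU (e1 i) (e1 j), hsol _ hyU (e1 i) (e2 j),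
    hsol _ hyU (e2 i) (e1 j), hsol _ hyU (e2 i) (e2 j)]
  have hRHS : (∑ k : Fin n, qCoeff a (fun l : Fin n => b ⟨(l : ℕ), by omega⟩) c k i j x
        * Dop k (fun t => u (emb n t)) x)
      = ∑ k : Fin n, qCoeff a (fun l : Fin n => b ⟨(l : ℕ), by omega⟩) c k i j x
        * (Dop (e1 k) u (emb n x) + Dop (e2 k) u (emb n x)) :=
    Finset.sum_congr rfl fun k _ => by rw [hDj x hx k]
  rw [hRHS]
  have key := key_alg a b c x hb2 hlast' hx1 hx1' hx0 hsub hadd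
    (fun m => Dop m u (emb n x)) (u (emb n x)) i j
  rw [show (fun l : Fin n => b (e1 l)) = (fun l : Fin n => b ⟨(l : ℕ), by omega⟩) from rfl]
    at key
  linear_combination key

end
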